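/- Suppose −1 < α < 0, 0 ≤ M ≤ N, and q < 0. Then an admissible u is a global minimizer of ∫_Ω H_TF if and only if there exists a measurable set U ⊆ Ω with |U| = (1/2)·(1 + m/n)·|Ω| such that u = (√n, 0, 0)·χ_U + (0, 0, √n)·χ_{Ω∖U} almost everywhere on Ω. -/

import Mathlib

open MeasureTheory

noncomputable section

abbrev E3 := EuclideanSpace ℝ (Fin 3)

/-- The sign `s`: `1` if `α ≥ 0`, `-1` otherwise. -/
def sgn' (α : ℝ) : ℝ := if 0 ≤ α then 1 else -1

/-- Thomas–Fermi energy density; coordinates: `v 0 = u₁`, `v 1 = u₀`, `v 2 = u₋₁`. -/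
def HTF (α q : ℝ) (v : Fin 3 → ℝ) : ℝ :=
  (1/2) * (v 0 ^ 2 + v 1 ^ 2 + v 2 ^ 2) ^ 2
    + (α/2) * (2 * v 1 ^ 2 * (v 0 - sgn' α * v 2) ^ 2 + (v 0 ^ 2 - v 2 ^ 2) ^ 2)
    + q * (v 0 ^ 2 + v 2 ^ 2)

/-- Admissibility: `u ∈ L⁴(Ω; ℝ³)`, nonnegative components a.e. on `Ω`,
with prescribed total mass `N` and total magnetization `M`. -/
structure Admissible (Ω : Set E3) (N M : ℝ) (u : E3 → Fin 3 → ℝ) : Prop where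
  memL4 : MemLp u 4 (volume.restrict Ω)
  nonneg : ∀ᵐ x ∂(volume.restrict Ω), ∀ i, 0 ≤ u x i
  mass : ∫ x in Ω, (u x 0 ^ 2 + u x 1 ^ 2 + u x 2 ^ 2) = N
  mag : ∫ x in Ω, (u x 0 ^ 2 - u x 2 ^ 2) = M

/-- `u` is a global minimizer of `∫_Ω H_TF` among admissible functions. -/
def IsMinimizer (Ω : Set E3) (α q N M : ℝ) (u : E3 → Fin 3 → ℝ) : Prop :=
  Admissible Ω N M u ∧
    ∀ v : E3 → Fin 3 → ℝ, Admissible Ω N M v →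
      ∫ x in Ω, HTF α q (u x) ≤ ∫ x in Ω, HTF α q (v x)

open Metric Bornology
open scoped ENNReal NNReal

section Helpers

/-! ### ℝ≥0∞ exponent arithmetic -/

lemma fin2' : (1:ℝ≥0∞)/2 ≠ ⊤ := by simp [ENNReal.div_eq_top]
lemma fin4' : (1:ℝ≥0∞)/4 ≠ ⊤ := by simp [ENNReal.div_eq_top]
lemma arith24 : (1:ℝ≥0∞)/2 = 1/4 + 1/4 := by
  apply (ENNReal.toReal_eq_toReal_iff' fin2' (by simp [ENNReal.add_eq_top, fin4'])).mp
  rw [ENNReal.toReal_add fin4' fin4']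
  simp [ENNReal.toReal_div]; norm_num
lemma arith12 : (1:ℝ≥0∞)/1 = 1/2 + 1/2 := by
  apply (ENNReal.toReal_eq_toReal_iff' (by simp) (by simp [ENNReal.add_eq_top, fin2'])).mp
  rw [ENNReal.toReal_add fin2' fin2']
  simp [ENNReal.toReal_div]; norm_num

variable {μ : Measure E3}

lemma comp4 {w : E3 → Fin 3 → ℝ} (hw : MemLp w 4 μ) (i : Fin 3) : MemLp (fun x => w x i) 4 μ := by
  have := (ContinuousLinearMap.proj (R := ℝ) (φ := fun _ : Fin 3 => ℝ) i).comp_memLp' hw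
  exact this

lemma mul24 {f g : E3 → ℝ} (hf : MemLp f 4 μ) (hg : MemLp g 4 μ) :
    MemLp (fun x => f x * g x) 2 μ := by
  have := hf.smul hg (p := 4) (q := 4) (r := 2)
    (hpqr := ⟨by simpa [one_div] using arith24.symm⟩)
  simpa [smul_eq_mul, mul_comm, Pi.mul_def] using this

lemma mul21 {f g : E3 → ℝ} (hf : MemLp f 2 μ) (hg : MemLp g 2 μ) :
    Integrable (fun x => f x * g x) μ := by
  rw [← memLp_one_iff_integrable]
  have := hf.smul hg (p := 2) (q := 2) (r := 1)
    (hpqr := ⟨by simpa [one_div] using arith12.symm⟩)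
  simpa [smul_eq_mul, mul_comm, Pi.mul_def] using this

/-! ### Pointwise algebra -/

def rho (v : Fin 3 → ℝ) : ℝ := v 0 ^ 2 + v 1 ^ 2 + v 2 ^ 2
def Gfun (α q n : ℝ) (v : Fin 3 → ℝ) : ℝ :=
  (1+α)/2 * (rho v - n)^2 + (-α/2) * (v 1 ^ 2 - 2 * v 0 * v 2)^2 + (-q) * v 1 ^ 2

lemma HTF_decomp {α : ℝ} (hα : α < 0) (q n : ℝ) (v : Fin 3 → ℝ) :
    HTF α q v = Gfun α q n v + ((1+α)*n + q) * rho v - (1+α)/2 * n^2 := by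
  simp only [HTF, Gfun, rho, sgn', if_neg (not_le.mpr hα)]
  ring

lemma Gfun_nonneg {α q : ℝ} (hαl : -1 < α) (hαu : α < 0) (hq : q < 0) (n : ℝ) (v : Fin 3 → ℝ) :
    0 ≤ Gfun α q n v := by
  have h1 : (0:ℝ) ≤ (1+α)/2 := by linarith
  have h2 : (0:ℝ) ≤ -α/2 := by linarith
  have h3 : (0:ℝ) ≤ -q := by linarith
  unfold Gfun
  positivity

lemma Gfun_zero_char {α q n : ℝ} (hαl : -1 < α) (hαu : α < 0) (hq : q < 0) (hn : 0 < n)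
    {v : Fin 3 → ℝ} (hv : ∀ i, 0 ≤ v i) (h0 : Gfun α q n v = 0) :
    v = ![Real.sqrt n, 0, 0] ∨ v = ![0, 0, Real.sqrt n] := by
  have h1 : (0:ℝ) < (1+α)/2 := by linarith
  have h2 : (0:ℝ) < -α/2 := by linarith
  have h3 : (0:ℝ) < -q := by linarith
  unfold Gfun at h0
  have p1 := mul_nonneg h1.le (sq_nonneg (rho v - n))
  have p2 := mul_nonneg h2.le (sq_nonneg (v 1 ^ 2 - 2 * v 0 * v 2))
  have p3 := mul_nonneg h3.le (sq_nonneg (v 1))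
  have q1 : (rho v - n)^2 = 0 := by
    have : (1+α)/2 * (rho v - n)^2 = 0 := by linarith
    rcases mul_eq_zero.mp this with h | h
    · linarith
    · exact h
  have q2 : (v 1 ^ 2 - 2 * v 0 * v 2)^2 = 0 := by
    have : (-α/2) * (v 1 ^ 2 - 2 * v 0 * v 2)^2 = 0 := by linarith
    rcases mul_eq_zero.mp this with h | h
    · linarith
    · exact h
  have q3 : v 1 = 0 := by
    have : (-q) * v 1 ^ 2 = 0 := by linarith
    rcases mul_eq_zero.mp this with h | h
    · linarith
    · exact pow_eq_zero_iff (by norm_num) |>.mp h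
  have e1 : rho v = n := by have := pow_eq_zero_iff (n := 2) (by norm_num) |>.mp q1; linarith
  have e2 : v 0 * v 2 = 0 := by
    have hq2 := pow_eq_zero_iff (n := 2) (by norm_num) |>.mp q2
    rw [q3] at hq2
    linarith
  have hrho : v 0 ^ 2 + v 2 ^ 2 = n := by
    unfold rho at e1
    have h13 : v 1 ^ 2 = 0 := by rw [q3]; ring
    linarith
  rcases mul_eq_zero.mp e2 with h | h
  · right
    have hsq : v 2 ^ 2 = n := by rw [← hrho, h]; ring
    have hv2 : v 2 = Real.sqrt n := by rw [← hsq, Real.sqrt_sq (hv 2)]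
    funext i; fin_cases i <;> simp [h, q3, hv2]
  · left
    have hsq : v 0 ^ 2 = n := by rw [← hrho, h]; ring
    have hv0 : v 0 = Real.sqrt n := by rw [← hsq, Real.sqrt_sq (hv 0)]
    funext i; fin_cases i <;> simp [h, q3, hv0]

lemma Gfun_c1 {α q n : ℝ} (hn : 0 ≤ n) : Gfun α q n ![Real.sqrt n, 0, 0] = 0 := by
  simp [Gfun, rho, Real.sq_sqrt hn]

lemma Gfun_c2 {α q n : ℝ} (hn : 0 ≤ n) : Gfun α q n ![0, 0, Real.sqrt n] = 0 := by
  simp [Gfun, rho, Real.sq_sqrt hn]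

/-! ### Integrability -/

variable [IsFiniteMeasure μ]

lemma sqmem {w : E3 → Fin 3 → ℝ} (hw : MemLp w 4 μ) (i j : Fin 3) :
    MemLp (fun x => w x i * w x j) 2 μ := mul24 (comp4 hw i) (comp4 hw j)

lemma memA {w : E3 → Fin 3 → ℝ} (hw : MemLp w 4 μ) : MemLp (fun x => rho (w x)) 2 μ := by
  have h := ((sqmem hw 0 0).add (sqmem hw 1 1)).add (sqmem hw 2 2)
  have : (fun x => rho (w x)) = fun x => (w x 0 * w x 0 + w x 1 * w x 1) + w x 2 * w x 2 := by
    funext x; simp [rho]; ring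
  rw [this]; exact h

lemma memB {w : E3 → Fin 3 → ℝ} (hw : MemLp w 4 μ) :
    MemLp (fun x => w x 1 ^ 2 - 2 * w x 0 * w x 2) 2 μ := by
  have h := (sqmem hw 1 1).sub ((sqmem hw 0 2).const_mul 2)
  have : (fun x => w x 1 ^ 2 - 2 * w x 0 * w x 2)
      = fun x => w x 1 * w x 1 - 2 * (w x 0 * w x 2) := by
    funext x; ring
  rw [this]; exact h

lemma sq_int {f : E3 → ℝ} (hf : MemLp f 2 μ) : Integrable (fun x => f x ^ 2) μ := by
  have := mul21 hf hf
  have h2 : (fun x => f x ^ 2) = fun x => f x * f x := by funext x; ring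
  rw [h2]; exact this

lemma integrable_G {w : E3 → Fin 3 → ℝ} (hw : MemLp w 4 μ) (α q n : ℝ) :
    Integrable (fun x => Gfun α q n (w x)) μ := by
  have hA : MemLp (fun x => rho (w x) - n) 2 μ := (memA hw).sub (memLp_const n)
  have h1 := (sq_int hA).const_mul ((1+α)/2)
  have h2 := (sq_int (memB hw)).const_mul (-α/2)
  have h3 := (sq_int ((comp4 hw 1).mono_exponent (by norm_num))).const_mul (-q)
  have : (fun x => Gfun α q n (w x)) =
      fun x => (1+α)/2 * (rho (w x) - n)^2 + (-α/2) * (w x 1 ^ 2 - 2 * w x 0 * w x 2)^2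
        + (-q) * (w x 1)^2 := by
    funext x; simp [Gfun]
  rw [this]
  exact (h1.add h2).add h3

lemma integrable_rho {w : E3 → Fin 3 → ℝ} (hw : MemLp w 4 μ) :
    Integrable (fun x => rho (w x)) μ :=
  memLp_one_iff_integrable.mp ((memA hw).mono_exponent (by norm_num))

lemma energy_decomp {w : E3 → Fin 3 → ℝ} (hw : MemLp w 4 μ) {α : ℝ} (hα : α < 0) (q n N : ℝ)
    (hmass : ∫ x, rho (w x) ∂μ = N) :
    ∫ x, HTF α q (w x) ∂μ =
      (∫ x, Gfun α q n (w x) ∂μ) + ((1+α)*n + q) * N - (1+α)/2 * n^2 * (μ Set.univ).toReal := by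
  have h : (fun x => HTF α q (w x)) =
      fun x => (Gfun α q n (w x) + ((1+α)*n + q) * rho (w x)) - (1+α)/2 * n^2 := by
    funext x; rw [HTF_decomp hα q n (w x)]
  have h1 : Integrable (fun x => Gfun α q n (w x) + ((1+α)*n + q) * rho (w x)) μ :=
    (integrable_G hw α q n).add ((integrable_rho hw).const_mul _)
  have h2 : Integrable (fun x => ((1+α)*n + q) * rho (w x)) μ :=
    (integrable_rho hw).const_mul _
  rw [h, integral_sub h1 (integrable_const _),
    integral_add (integrable_G hw α q n) h2,
    MeasureTheory.integral_const_mul, hmass, integral_const, smul_eq_mul, measureReal_def]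
  ring

end Helpers

/-! ### Existence of subsets of prescribed measure -/

lemma exists_subset_toReal (Ω : Set E3) (hΩm : MeasurableSet Ω) (hΩb : IsBounded Ω)
    {r : ℝ} (hr0 : 0 ≤ r) (hr : r ≤ (volume Ω).toReal) :
    ∃ U : Set E3, MeasurableSet U ∧ U ⊆ Ω ∧ (volume U).toReal = r := by
  have hfin : volume Ω ≠ ∞ := hΩb.measure_lt_top.ne
  set f : ℝ → ℝ := fun t => (volume (Ω ∩ closedBall 0 t)).toReal with hf
  set g : ℝ → ℝ := fun t => (volume (closedBall (0:E3) t)).toReal with hgdef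
  have hAfin : ∀ t, volume (Ω ∩ closedBall (0:E3) t) ≠ ∞ :=
    fun t => ((measure_mono Set.inter_subset_left).trans_lt hΩb.measure_lt_top).ne
  have hBfin : ∀ t : ℝ, volume (closedBall (0:E3) t) ≠ ∞ :=
    fun t => (measure_closedBall_lt_top).ne
  have key : ∀ s t : ℝ, s ≤ t → 0 ≤ f t - f s ∧ f t - f s ≤ g t - g s := by
    intro s t hst
    have hsub : closedBall (0:E3) s ⊆ closedBall 0 t := closedBall_subset_closedBall hst
    have h1 : Ω ∩ closedBall 0 s ⊆ Ω ∩ closedBall 0 t := Set.inter_subset_inter_right _ hsub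
    have hd : (Ω ∩ closedBall 0 t) \ (Ω ∩ closedBall 0 s) ⊆ closedBall 0 t \ closedBall 0 s := by
      rintro x ⟨⟨hxΩ, hxt⟩, hxn⟩
      exact ⟨hxt, fun hxs => hxn ⟨hxΩ, hxs⟩⟩
    have e1 : volume (Ω ∩ closedBall 0 t) =
        volume (Ω ∩ closedBall 0 s) + volume ((Ω ∩ closedBall 0 t) \ (Ω ∩ closedBall 0 s)) := by
      rw [measure_add_diff ((hΩm.inter measurableSet_closedBall).nullMeasurableSet) _,
        Set.union_eq_self_of_subset_left h1]
    have e2 : volume (closedBall (0:E3) t) =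
        volume (closedBall (0:E3) s) + volume (closedBall (0:E3) t \ closedBall 0 s) := by
      rw [measure_add_diff (measurableSet_closedBall.nullMeasurableSet) _,
        Set.union_eq_self_of_subset_left hsub]
    have hd1fin : volume ((Ω ∩ closedBall (0:E3) t) \ (Ω ∩ closedBall 0 s)) ≠ ∞ :=
      ((measure_mono (Set.diff_subset.trans Set.inter_subset_left)).trans_lt
        hΩb.measure_lt_top).ne
    have hd2fin : volume (closedBall (0:E3) t \ closedBall 0 s) ≠ ∞ :=
      ((measure_mono Set.diff_subset).trans_lt measure_closedBall_lt_top).ne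
    have f1 : f t = f s + (volume ((Ω ∩ closedBall 0 t) \ (Ω ∩ closedBall 0 s))).toReal := by
      rw [hf]; dsimp only; rw [e1, ENNReal.toReal_add (hAfin s) hd1fin]
    have g1 : g t = g s + (volume (closedBall (0:E3) t \ closedBall 0 s)).toReal := by
      rw [hgdef]; dsimp only; rw [e2, ENNReal.toReal_add (hBfin s) hd2fin]
    constructor
    · rw [f1]
      have := ENNReal.toReal_nonneg
        (a := volume ((Ω ∩ closedBall (0:E3) t) \ (Ω ∩ closedBall 0 s)))
      linarith
    · rw [f1, g1]
      have := ENNReal.toReal_mono hd2fin (measure_mono hd)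
      linarith
  have hgform : ∀ t : ℝ, g t = (max t 0) ^ 3 * (volume (ball (0:E3) 1)).toReal := by
    intro t
    rcases le_or_gt 0 t with h | h
    · rw [hgdef]; dsimp only
      rw [Measure.addHaar_closedBall _ _ h, ENNReal.toReal_mul,
        ENNReal.toReal_ofReal (by positivity)]
      rw [max_eq_left h]
      congr 1
      rw [finrank_euclideanSpace_fin]
    · rw [hgdef]; dsimp only
      rw [closedBall_eq_empty.mpr h, measure_empty, max_eq_right h.le]
      simp
  have hgcont : Continuous g := by
    have : Continuous fun t : ℝ => (max t 0) ^ 3 * (volume (ball (0:E3) 1)).toReal := by fun_prop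
    exact this.congr fun t => (hgform t).symm
  have hfcont : Continuous f := by
    rw [continuous_iff_continuousAt]
    intro t
    rw [Metric.continuousAt_iff]
    intro ε hε
    obtain ⟨δ, hδ, H⟩ := Metric.continuousAt_iff.mp hgcont.continuousAt ε hε
    refine ⟨δ, hδ, fun {s} hs => ?_⟩
    have hd : dist (f s) (f t) ≤ dist (g s) (g t) := by
      rcases le_total s t with h | h
      · obtain ⟨k1, k2⟩ := key s t h
        rw [Real.dist_eq, Real.dist_eq, abs_sub_comm (f s), abs_sub_comm (g s),
          abs_of_nonneg k1, abs_of_nonneg (by linarith)]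
        linarith
      · obtain ⟨k1, k2⟩ := key t s h
        rw [Real.dist_eq, Real.dist_eq, abs_of_nonneg k1, abs_of_nonneg (by linarith)]
        linarith
    exact lt_of_le_of_lt hd (H hs)
  obtain ⟨R, hR⟩ := hΩb.subset_closedBall 0
  set T : ℝ := max R 0 with hT
  have hT1 : (-1:ℝ) ≤ T := by have := le_max_right R 0; linarith
  have hfm1 : f (-1) = 0 := by
    rw [hf]; dsimp only
    rw [closedBall_eq_empty.mpr (by norm_num), Set.inter_empty, measure_empty]
    simp
  have hfT : f T = (volume Ω).toReal := by
    rw [hf]; dsimp only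
    rw [Set.inter_eq_self_of_subset_left
      (hR.trans (closedBall_subset_closedBall (le_max_left R 0)))]
  have hIVT := intermediate_value_Icc hT1 hfcont.continuousOn
  have hrmem : r ∈ Set.Icc (f (-1)) (f T) := by rw [hfm1, hfT]; exact ⟨hr0, hr⟩
  obtain ⟨t₀, _, ht₀⟩ := hIVT hrmem
  exact ⟨Ω ∩ closedBall 0 t₀, hΩm.inter measurableSet_closedBall, Set.inter_subset_left, ht₀⟩

/-! ### Admissibility of the candidate -/

open scoped Classical in
lemma cand_admissible (Ω : Set E3) (hΩm : MeasurableSet Ω) (hΩb : IsBounded Ω)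
    (hΩr : 0 < (volume Ω).toReal)
    {N M n m : ℝ} (hn0 : 0 < n)
    (hNn : N = n * (volume Ω).toReal) (hMm : M = m * (volume Ω).toReal)
    (U₀ : Set E3) (hU₀m : MeasurableSet U₀) (hU₀sub : U₀ ⊆ Ω)
    (hU₀r : (volume U₀).toReal = (1/2) * (1 + m/n) * (volume Ω).toReal) :
    Admissible Ω N M
      (fun x => if x ∈ U₀ then ![Real.sqrt n, 0, 0] else ![0, 0, Real.sqrt n]) := by
  haveI : IsFiniteMeasure (volume.restrict Ω) :=
    ⟨by rw [Measure.restrict_apply_univ]; exact hΩb.measure_lt_top⟩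
  set cand : E3 → Fin 3 → ℝ :=
    fun x => if x ∈ U₀ then ![Real.sqrt n, 0, 0] else ![0, 0, Real.sqrt n] with hcand
  have hmeas : Measurable cand := Measurable.ite hU₀m measurable_const measurable_const
  have hsqrtnn : (0:ℝ) ≤ Real.sqrt n := Real.sqrt_nonneg n
  refine ⟨?_, ?_, ?_, ?_⟩
  · refine MemLp.of_bound hmeas.stronglyMeasurable.aestronglyMeasurable (Real.sqrt n) ?_
    filter_upwards with x
    rw [pi_norm_le_iff_of_nonneg hsqrtnn]
    intro i
    by_cases h : x ∈ U₀ <;> simp only [hcand, h, if_true, if_false] <;>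
      fin_cases i <;> simp [abs_of_nonneg hsqrtnn]
  · filter_upwards with x i
    by_cases h : x ∈ U₀ <;> simp only [hcand, h, if_true, if_false] <;>
      fin_cases i <;> simp [hsqrtnn]
  · have hconst : ∀ x, cand x 0 ^ 2 + cand x 1 ^ 2 + cand x 2 ^ 2 = n := by
      intro x
      by_cases h : x ∈ U₀ <;> simp [hcand, h, Real.sq_sqrt hn0.le]
    calc ∫ x in Ω, (cand x 0 ^ 2 + cand x 1 ^ 2 + cand x 2 ^ 2)
        = ∫ _x in Ω, n := by exact integral_congr_ae (Filter.Eventually.of_forall hconst)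
      _ = N := by rw [setIntegral_const, smul_eq_mul, hNn, mul_comm, measureReal_def]
  · have hform : ∀ x, cand x 0 ^ 2 - cand x 2 ^ 2
        = U₀.indicator (fun _ => (2*n : ℝ)) x - n := by
      intro x
      by_cases h : x ∈ U₀
      · simp [hcand, h, Set.indicator_of_mem, Real.sq_sqrt hn0.le]; try ring
      · simp [hcand, h, Set.indicator_of_notMem, Real.sq_sqrt hn0.le]; try ring
    have hind : Integrable (fun x => U₀.indicator (fun _ => (2*n:ℝ)) x) (volume.restrict Ω) :=
      (integrable_const (2*n)).indicator hU₀m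
    calc ∫ x in Ω, (cand x 0 ^ 2 - cand x 2 ^ 2)
        = ∫ x in Ω, (U₀.indicator (fun _ => (2*n : ℝ)) x - n) :=
          integral_congr_ae (Filter.Eventually.of_forall hform)
      _ = (∫ x in Ω, U₀.indicator (fun _ => (2*n : ℝ)) x) - ∫ _x in Ω, (n:ℝ) :=
          integral_sub hind (integrable_const n)
      _ = 2*n*(volume U₀).toReal - n * (volume Ω).toReal := by
          rw [integral_indicator hU₀m, setIntegral_const, setIntegral_const, smul_eq_mul,
            smul_eq_mul, measureReal_restrict_apply hU₀m,
            Set.inter_eq_self_of_subset_left hU₀sub, measureReal_def, measureReal_def]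
          ring
      _ = M := by
          rw [hU₀r, hMm]
          have hne : n ≠ 0 := hn0.ne'
          field_simp
          ring

/-- Ferromagnetic case `q < 0`: the minimizers are exactly the `MS+MS` mixed states. -/
theorem ferro_MS_MS
    (Ω : Set E3) (hΩm : MeasurableSet Ω) (hΩb : Bornology.IsBounded Ω)
    (hΩpos : 0 < volume Ω)
    (α q N M n m : ℝ)
    (hαl : -1 < α) (hαu : α < 0) (hN : 0 < N) (hM0 : 0 ≤ M) (hMN : M ≤ N)
    (hn : n = N / (volume Ω).toReal) (hm : m = M / (volume Ω).toReal)
    (hq : q < 0)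
    (u : E3 → Fin 3 → ℝ) (hu : Admissible Ω N M u) :
    IsMinimizer Ω α q N M u ↔
      ∃ U : Set E3, MeasurableSet U ∧ U ⊆ Ω ∧
        (volume U).toReal = (1 / 2) * (1 + m / n) * (volume Ω).toReal ∧
        ∀ᵐ x ∂(volume.restrict Ω),
          (x ∈ U → u x = ![Real.sqrt n, 0, 0]) ∧ (x ∉ U → u x = ![0, 0, Real.sqrt n]) := by
  classical
  haveI : IsFiniteMeasure (volume.restrict Ω) :=
    ⟨by rw [Measure.restrict_apply_univ]; exact hΩb.measure_lt_top⟩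
  have hfin : volume Ω ≠ ∞ := hΩb.measure_lt_top.ne
  set W : ℝ := (volume Ω).toReal with hW
  have hWpos : 0 < W := ENNReal.toReal_pos hΩpos.ne' hfin
  have hn0 : 0 < n := by rw [hn]; exact div_pos hN hWpos
  have hm0 : 0 ≤ m := by rw [hm]; exact div_nonneg hM0 hWpos.le
  have hmn : m ≤ n := by rw [hm, hn]; gcongr
  have hNn : N = n * W := by rw [hn]; field_simp
  have hMm : M = m * W := by rw [hm]; field_simp
  have hdec : ∀ w : E3 → Fin 3 → ℝ, Admissible Ω N M w →
      ∫ x in Ω, HTF α q (w x) = (∫ x in Ω, Gfun α q n (w x))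
        + ((1+α)*n + q) * N - (1+α)/2 * n^2 * W := by
    intro w hw
    have hmass : ∫ x, rho (w x) ∂(volume.restrict Ω) = N := hw.mass
    have hed := energy_decomp hw.memL4 hαu q n N hmass
    rw [show (∫ x in Ω, HTF α q (w x)) = ∫ x, HTF α q (w x) ∂(volume.restrict Ω) from rfl, hed,
      Measure.restrict_apply_univ]
  constructor
  · -- forward direction
    intro hmin
    have hr0 : 0 ≤ (1/2) * (1 + m/n) * W := by
      have hd0 : 0 ≤ m/n := div_nonneg hm0 hn0.le
      have : (0:ℝ) ≤ (1/2) * (1 + m/n) := by linarith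
      exact mul_nonneg this hWpos.le
    have hr1 : (1/2) * (1 + m/n) * W ≤ W := by
      have h1 : m/n ≤ 1 := (div_le_one hn0).mpr hmn
      nlinarith
    obtain ⟨U₀, hU₀m, hU₀sub, hU₀r⟩ := exists_subset_toReal Ω hΩm hΩb hr0 hr1
    have hcand := cand_admissible Ω hΩm hΩb hWpos hn0 hNn hMm U₀ hU₀m hU₀sub hU₀r
    set cand : E3 → Fin 3 → ℝ :=
      fun x => if x ∈ U₀ then ![Real.sqrt n, 0, 0] else ![0, 0, Real.sqrt n] with hcanddef
    have hGcand : ∫ x in Ω, Gfun α q n (cand x) = 0 := by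
      have hzero : ∀ x, Gfun α q n (cand x) = 0 := by
        intro x
        by_cases h : x ∈ U₀
        · simp only [hcanddef, h, if_true]; exact Gfun_c1 hn0.le
        · simp only [hcanddef, h, if_false]; exact Gfun_c2 hn0.le
      calc ∫ x in Ω, Gfun α q n (cand x) = ∫ _x in Ω, (0:ℝ) :=
            integral_congr_ae (Filter.Eventually.of_forall hzero)
        _ = 0 := integral_zero _ _
    have hle := hmin.2 cand hcand
    rw [hdec u hu, hdec cand hcand, hGcand] at hle
    have hGu_le : ∫ x in Ω, Gfun α q n (u x) ≤ 0 := by linarith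
    have hGu_nonneg : 0 ≤ ∫ x in Ω, Gfun α q n (u x) :=
      integral_nonneg (fun x => Gfun_nonneg hαl hαu hq n (u x))
    have hGu0 : ∫ x in Ω, Gfun α q n (u x) = 0 := le_antisymm hGu_le hGu_nonneg
    have hae0 : ∀ᵐ x ∂(volume.restrict Ω), Gfun α q n (u x) = 0 := by
      have hzz := (integral_eq_zero_iff_of_nonneg
        (fun x => Gfun_nonneg hαl hαu hq n (u x)) (integrable_G hu.memL4 α q n)).mp hGu0
      filter_upwards [hzz] with x hx
      exact hx
    have hchar : ∀ᵐ x ∂(volume.restrict Ω),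
        u x = ![Real.sqrt n, 0, 0] ∨ u x = ![0, 0, Real.sqrt n] := by
      filter_upwards [hae0, hu.nonneg] with x h0 hpos
      exact Gfun_zero_char hαl hαu hq hn0 hpos h0
    set g := hu.memL4.1.mk u with hg
    have hug : u =ᵐ[volume.restrict Ω] g := hu.memL4.1.ae_eq_mk
    have hgm : Measurable g := hu.memL4.1.stronglyMeasurable_mk.measurable
    set U : Set E3 := Ω ∩ {x | g x 2 < g x 0} with hUdef
    have hUm : MeasurableSet U := hΩm.inter
      (measurableSet_lt ((measurable_pi_apply 2).comp hgm) ((measurable_pi_apply 0).comp hgm))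
    have hUsub : U ⊆ Ω := Set.inter_subset_left
    have hsqrtpos : 0 < Real.sqrt n := Real.sqrt_pos.mpr hn0
    have Hae : ∀ᵐ x ∂(volume.restrict Ω),
        (x ∈ U → u x = ![Real.sqrt n, 0, 0]) ∧ (x ∉ U → u x = ![0, 0, Real.sqrt n]) := by
      filter_upwards [hchar, hug, ae_restrict_mem hΩm] with x hx hxg hxΩ
      constructor
      · intro hxU
        rcases hx with h1 | h2
        · exact h1
        · exfalso
          have hlt : g x 2 < g x 0 := hxU.2
          rw [← hxg, h2] at hlt
          have hneg : Real.sqrt n < 0 := by simpa using hlt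
          linarith
      · intro hxU
        rcases hx with h1 | h2
        · exfalso
          have hnlt : ¬ g x 2 < g x 0 := fun hc => hxU ⟨hxΩ, hc⟩
          rw [← hxg, h1] at hnlt
          have : ¬ (0:ℝ) < Real.sqrt n := by simpa using hnlt
          exact this hsqrtpos
        · exact h2
    refine ⟨U, hUm, hUsub, ?_, Hae⟩
    have heq : ∀ᵐ x ∂(volume.restrict Ω),
        u x 0 ^ 2 - u x 2 ^ 2 = U.indicator (fun _ => (2*n:ℝ)) x - n := by
      filter_upwards [Hae] with x hx
      by_cases hxU : x ∈ U
      · rw [hx.1 hxU]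
        simp [Set.indicator_of_mem hxU, Real.sq_sqrt hn0.le]
        try ring
      · rw [hx.2 hxU]
        simp [Set.indicator_of_notMem hxU, Real.sq_sqrt hn0.le]
        try ring
    have hind : Integrable (fun x => U.indicator (fun _ => (2*n:ℝ)) x) (volume.restrict Ω) :=
      (integrable_const (2*n)).indicator hUm
    have hMeq : M = 2*n*(volume U).toReal - n * W := by
      rw [← hu.mag]
      calc ∫ x in Ω, (u x 0 ^ 2 - u x 2 ^ 2)
          = ∫ x in Ω, (U.indicator (fun _ => (2*n : ℝ)) x - n) := integral_congr_ae heq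
        _ = (∫ x in Ω, U.indicator (fun _ => (2*n : ℝ)) x) - ∫ _x in Ω, (n:ℝ) :=
            integral_sub hind (integrable_const n)
        _ = 2*n*(volume U).toReal - n * W := by
            rw [integral_indicator hUm, setIntegral_const, setIntegral_const, smul_eq_mul,
              smul_eq_mul, measureReal_restrict_apply hUm,
              Set.inter_eq_self_of_subset_left hUsub, measureReal_def, measureReal_def, ← hW]
            ring
    apply mul_left_cancel₀ (show (2*n : ℝ) ≠ 0 by positivity)
    have hrhs : 2*n*((1/2)*(1+m/n)*W) = n*W + m*W := by
      field_simp
    rw [hrhs]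
    linarith [hMeq, hMm, hNn]
  · -- reverse direction
    rintro ⟨U, hUm, hUsub, hUvol, hae⟩
    refine ⟨hu, fun v hv => ?_⟩
    have hGu0 : ∫ x in Ω, Gfun α q n (u x) = 0 := by
      have h0 : ∀ᵐ x ∂(volume.restrict Ω), Gfun α q n (u x) = 0 := by
        filter_upwards [hae] with x hx
        by_cases h : x ∈ U
        · rw [hx.1 h]; exact Gfun_c1 hn0.le
        · rw [hx.2 h]; exact Gfun_c2 hn0.le
      calc ∫ x in Ω, Gfun α q n (u x) = ∫ _x in Ω, (0:ℝ) := integral_congr_ae h0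
        _ = 0 := integral_zero _ _
    have hGv : 0 ≤ ∫ x in Ω, Gfun α q n (v x) :=
      integral_nonneg (fun x => Gfun_nonneg hαl hαu hq n (v x))
    rw [hdec u hu, hdec v hv, hGu0]
    linarith
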